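/- Let β be a constant-coefficient p-form on ℝ^{n+1} (1 ≤ p ≤ n). For a subset I = {i_0 < ⋯ < i_r} ⊆ {0,…,n}, define β'_r(I) = ((-1)^r / (p(p-1)⋯(p-r+1))) · Σ_{j=0}^r (-1)^j (C_{P^{i_0}} ∘ ⋯ ∘ Ĉ_{P^{i_j}} ∘ ⋯ ∘ C_{P^{i_r}})(β), where C_{P^i} is interior multiplication by the i-th standard basis vector. Then the cochain β'_r : {I ⊆ {0,…,n} : |I| = r+1} → Λ^{p-r}(ℝ^{n+1})* is closed under the Čech-type coboundary, i.e., for every I with |I| = r+2, Σ_{j=0}^{r+1} (-1)^j β'_r(I ∖ {i_j}) = 0. -/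
import Mathlib


open scoped BigOperators

variable {V : Type*} [AddCommGroup V] [Module ℝ V]

/-- Iterated interior multiplication `C_{u_0} ∘ ⋯ ∘ C_{u_{r-1}}` (the rightmost contraction
applied first) on alternating forms. -/
noncomputable def iterContract : {r : ℕ} → (Fin r → V) → {q : ℕ} →
    (V [⋀^Fin (q + r)]→ₗ[ℝ] ℝ) → (V [⋀^Fin q]→ₗ[ℝ] ℝ)
  | 0, _, _, β => β
  | r + 1, u, q, β => iterContract (fun i => u i.castSucc) (β.curryLeft (u (Fin.last r)))

/-- The cochain `β'_r` attached to a constant-coefficient `p`-form `β` on `ℝ^{n+1}`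
(with `p = q + r`): for `I = {i_0 < ⋯ < i_r}`,
`β'_r(I) = ((-1)^r / (p(p-1)⋯(p-r+1))) ∑_j (-1)^j (C_{P^{i_0}} ∘ ⋯ ∘ Ĉ_{P^{i_j}} ∘ ⋯ ∘
C_{P^{i_r}})(β)`. -/
noncomputable def betaCochain {n q r : ℕ}
    (β : (Fin (n + 1) → ℝ) [⋀^Fin (q + r)]→ₗ[ℝ] ℝ)
    (c : Fin (r + 1) → Fin (n + 1)) : (Fin (n + 1) → ℝ) [⋀^Fin q]→ₗ[ℝ] ℝ :=
  ((-1 : ℝ) ^ r / ((Nat.descFactorial (q + r) r : ℕ) : ℝ)) •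
    ∑ j : Fin (r + 1), ((-1 : ℝ) ^ (j : ℕ)) •
      iterContract (fun i : Fin r => Pi.single (c (j.succAbove i)) (1 : ℝ)) β

lemma coe_succAbove' {m : ℕ} (p : Fin (m + 1)) (i : Fin m) :
    ((p.succAbove i : Fin (m + 1)) : ℕ) = if (i : ℕ) < (p : ℕ) then (i : ℕ) else (i : ℕ) + 1 := by
  rw [Fin.succAbove]
  by_cases h : (i : ℕ) < (p : ℕ)
  · rw [if_pos, if_pos h, Fin.coe_castSucc]
    rwa [Fin.lt_def]
  · rw [if_neg, if_neg h, Fin.val_succ]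
    rwa [Fin.lt_def]

lemma succAbove_key {r : ℕ} (j : Fin (r + 2)) (k : Fin (r + 1)) (h : (k : ℕ) < (j : ℕ))
    (hj : j ≠ 0) (i : Fin r) :
    j.succAbove (k.succAbove i) = (k.castSucc).succAbove ((j.pred hj).succAbove i) := by
  have hi := i.isLt
  have hk := k.isLt
  have hjlt := j.isLt
  have hj0 : (j : ℕ) ≠ 0 := fun h0 => hj (Fin.ext h0)
  apply Fin.ext
  simp only [coe_succAbove', Fin.coe_castSucc, Fin.coe_pred]
  split_ifs <;> omega

/-- The involution pairing `(j, k)` with the pair giving the same composite face map. -/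
def flipPair {r : ℕ} (p : Fin (r + 2) × Fin (r + 1)) : Fin (r + 2) × Fin (r + 1) :=
  if h : (p.2 : ℕ) < (p.1 : ℕ) then
    (p.2.castSucc, p.1.pred (fun h0 => by simp [h0] at h))
  else
    (p.2.succ, ⟨(p.1 : ℕ), by have := p.2.isLt; omega⟩)

lemma flipPair_comp {r : ℕ} (p : Fin (r + 2) × Fin (r + 1)) :
    (flipPair p).1.succAbove ∘ (flipPair p).2.succAbove = p.1.succAbove ∘ p.2.succAbove := by
  obtain ⟨j, k⟩ := p
  funext i
  rw [flipPair]
  by_cases h : (k : ℕ) < (j : ℕ)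
  · rw [dif_pos h]
    exact (succAbove_key j k h (fun h0 => by simp [h0] at h) i).symm
  · rw [dif_neg h]
    push_neg at h
    have h' : ((⟨(j : ℕ), by have := k.isLt; omega⟩ : Fin (r + 1)) : ℕ) < (k.succ : ℕ) := by
      simp; omega
    have := succAbove_key k.succ ⟨(j : ℕ), by have := k.isLt; omega⟩ h'
      (Fin.succ_ne_zero k) i
    simp only [Function.comp_apply]
    rw [this, Fin.pred_succ]
    exact congrArg (fun a => Fin.succAbove a (k.succAbove i)) (Fin.ext rfl)

lemma flipPair_sign {r : ℕ} (p : Fin (r + 2) × Fin (r + 1)) :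
    ((-1 : ℝ) ^ (((flipPair p).1 : ℕ) + ((flipPair p).2 : ℕ)))
      = -((-1 : ℝ) ^ ((p.1 : ℕ) + (p.2 : ℕ))) := by
  obtain ⟨j, k⟩ := p
  rw [flipPair]
  by_cases h : (k : ℕ) < (j : ℕ)
  · rw [dif_pos h]
    simp only [Fin.coe_castSucc, Fin.coe_pred]
    have : (j : ℕ) + (k : ℕ) = ((k : ℕ) + ((j : ℕ) - 1)) + 1 := by omega
    rw [this, pow_succ]; ring
  · rw [dif_neg h]
    simp only [Fin.val_succ]
    have : ((k : ℕ) + 1) + (j : ℕ) = ((j : ℕ) + (k : ℕ)) + 1 := by omega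
    rw [this, pow_succ]; ring

lemma flipPair_invol {r : ℕ} (p : Fin (r + 2) × Fin (r + 1)) : flipPair (flipPair p) = p := by
  obtain ⟨j, k⟩ := p
  by_cases h : (k : ℕ) < (j : ℕ)
  · have e1 : flipPair (j, k) = (k.castSucc, j.pred (fun h0 => by simp [h0] at h)) := by
      rw [flipPair, dif_pos h]
    rw [e1, flipPair, dif_neg (by simp only [Fin.coe_pred, Fin.coe_castSucc]; omega)]
    refine Prod.ext ?_ ?_
    · simp [Fin.succ_pred]
    · exact Fin.ext rfl
  · have e1 : flipPair (j, k) = (k.succ, ⟨(j : ℕ), by have := k.isLt; omega⟩) := by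
      rw [flipPair, dif_neg h]
    push_neg at h
    rw [e1, flipPair, dif_pos (by simp only [Fin.val_succ]; omega)]
    refine Prod.ext ?_ ?_
    · exact Fin.ext rfl
    · simp [Fin.pred_succ]

lemma double_sum_zero {M : Type*} [AddCommGroup M] [Module ℝ M] {r : ℕ}
    (F : (Fin r → Fin (r + 2)) → M) :
    ∑ j : Fin (r + 2), ∑ k : Fin (r + 1),
      ((-1 : ℝ) ^ ((j : ℕ) + (k : ℕ))) • F (j.succAbove ∘ k.succAbove) = 0 := by
  rw [← Finset.sum_product']
  refine Finset.sum_ninvolution flipPair ?_ ?_ (fun _ => Finset.mem_univ _) flipPair_invol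
  · intro p
    rw [flipPair_comp, flipPair_sign, ← add_smul]
    ring_nf
    exact zero_smul ℝ _
  · intro p _
    intro hfix
    obtain ⟨j, k⟩ := p
    have := congrArg (fun q => ((q.1 : ℕ))) hfix
    rw [flipPair] at this
    by_cases h : (k : ℕ) < (j : ℕ)
    · rw [dif_pos h] at this
      simp only [Fin.coe_castSucc] at this
      omega
    · rw [dif_neg h] at this
      simp only [Fin.val_succ] at this
      push_neg at h
      omega

/-- The cochain `β'_r` is closed under the Čech-type coboundary: for every
`I = {i_0 < ⋯ < i_{r+1}} ⊆ {0, …, n}`, `∑_j (-1)^j β'_r(I ∖ {i_j}) = 0`. -/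
theorem betaCochain_closed (n q r : ℕ) (hp1 : 1 ≤ q + r) (hpn : q + r ≤ n)
    (β : (Fin (n + 1) → ℝ) [⋀^Fin (q + r)]→ₗ[ℝ] ℝ)
    (c : Fin (r + 2) → Fin (n + 1)) (hc : StrictMono c) :
    ∑ j : Fin (r + 2), ((-1 : ℝ) ^ (j : ℕ)) • betaCochain β (c ∘ j.succAbove) = 0 := by
  set s : ℝ := ((-1 : ℝ) ^ r / ((Nat.descFactorial (q + r) r : ℕ) : ℝ)) with hs
  have step : ∀ j : Fin (r + 2),
      ((-1 : ℝ) ^ (j : ℕ)) • betaCochain β (c ∘ j.succAbove)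
        = s • ∑ k : Fin (r + 1), ((-1 : ℝ) ^ ((j : ℕ) + (k : ℕ))) •
            iterContract (fun i : Fin r =>
              Pi.single (c ((j.succAbove ∘ k.succAbove) i)) (1 : ℝ)) β := by
    intro j
    simp only [betaCochain]
    simp only [Finset.smul_sum, smul_smul]
    refine Finset.sum_congr rfl fun k _ => ?_
    have h : ((-1 : ℝ) ^ (j : ℕ)) * (s * (-1 : ℝ) ^ (k : ℕ))
        = s * (-1 : ℝ) ^ ((j : ℕ) + (k : ℕ)) := by rw [pow_add]; ring
    rw [h]
    rfl
  simp only [step]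
  rw [← Finset.smul_sum]
  rw [double_sum_zero (fun g => iterContract (fun i : Fin r => Pi.single (c (g i)) (1 : ℝ)) β)]
  exact smul_zero s
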